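/- arXiv:2212.12348 — 3 statements merged into one kernel-verified Lean document; each statement's English description precedes it below -/
import Mathlib

section
/- Let V and W be linear subspaces of ℝ^n of complementary dimensions with V ∩ W = {0}. Then |V ∧ W| = |V^⊥ ∧ W^⊥|, where V^⊥, W^⊥ denote orthogonal complements and |·∧·| is the wedge quantity defined via orthonormal bases (absolute determinant of the concatenated orthonormal bases). -/
open MeasureTheory Module Matrix
open scoped RealInnerProductSpace

namespace Stmt1Aux

variable {n p q : ℕ}

/-- The `n × n` matrix whose columns are the vectors `a` followed by the vectors `b`. -/
def colMat (h : p + q = n) (a : Fin p → EuclideanSpace ℝ (Fin n))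
    (b : Fin q → EuclideanSpace ℝ (Fin n)) : Matrix (Fin n) (Fin n) ℝ :=
  Matrix.of fun i j => Fin.append a b (Fin.cast h.symm j) i

/-- Reindexing equivalence. -/
def eqv (h : p + q = n) : Fin n ≃ Fin p ⊕ Fin q :=
  (finCongr h.symm).trans finSumFinEquiv.symm

lemma colMat_eq (h : p + q = n) (a : Fin p → EuclideanSpace ℝ (Fin n))
    (b : Fin q → EuclideanSpace ℝ (Fin n)) :
    colMat h a b =
      (Matrix.of fun (s : Fin p ⊕ Fin q) (i : Fin n) => Sum.elim a b s i)ᵀ.submatrix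
        id (eqv h) := by
  ext i j
  simp only [colMat, Matrix.of_apply, Matrix.submatrix_apply, Matrix.transpose_apply, eqv,
    Equiv.trans_apply, finCongr_apply, id_eq]
  induction (Fin.cast h.symm j) using Fin.addCases with
  | left j' => simp
  | right j' => simp

lemma transpose_mul_colMat (h : p + q = n) (a c : Fin p → EuclideanSpace ℝ (Fin n))
    (b d : Fin q → EuclideanSpace ℝ (Fin n)) :
    (colMat h a b)ᵀ * colMat h c d =
      (Matrix.fromBlocks
        (Matrix.of fun i j => ⟪a i, c j⟫) (Matrix.of fun i j => ⟪a i, d j⟫)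
        (Matrix.of fun i j => ⟪b i, c j⟫)
          (Matrix.of fun i j => ⟪b i, d j⟫)).submatrix (eqv h) (eqv h) := by
  rw [colMat_eq h a b, colMat_eq h c d, Matrix.transpose_submatrix, Matrix.transpose_transpose]
  have : (Matrix.of fun (s : Fin p ⊕ Fin q) (i : Fin n) => Sum.elim a b s i).submatrix
        (eqv h) id * (Matrix.of fun (s : Fin p ⊕ Fin q) (i : Fin n) => Sum.elim c d s i)ᵀ.submatrix
        id (eqv h) =
      ((Matrix.of fun (s : Fin p ⊕ Fin q) (i : Fin n) => Sum.elim a b s i) *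
        (Matrix.of fun (s : Fin p ⊕ Fin q) (i : Fin n) => Sum.elim c d s i)ᵀ).submatrix
        (eqv h) (eqv h) := by
    have := Matrix.submatrix_mul_equiv
      (Matrix.of fun (s : Fin p ⊕ Fin q) (i : Fin n) => Sum.elim a b s i)
      (Matrix.of fun (s : Fin p ⊕ Fin q) (i : Fin n) => Sum.elim c d s i)ᵀ
      (eqv h) (Equiv.refl (Fin n)) (eqv h)
    simpa using this
  rw [this]
  have hblocks : (Matrix.of fun (s : Fin p ⊕ Fin q) (i : Fin n) => Sum.elim a b s i) *
        (Matrix.of fun (s : Fin p ⊕ Fin q) (i : Fin n) => Sum.elim c d s i)ᵀ =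
      Matrix.fromBlocks
        (Matrix.of fun i j => ⟪a i, c j⟫) (Matrix.of fun i j => ⟪a i, d j⟫)
        (Matrix.of fun i j => ⟪b i, c j⟫) (Matrix.of fun i j => ⟪b i, d j⟫) := by
    ext s t
    rcases s with s | s <;> rcases t with t | t <;>
      simp [Matrix.mul_apply, PiLp.inner_apply, RCLike.inner_apply, mul_comm]
  rw [hblocks]

lemma det_transpose_mul_colMat (h : p + q = n) (a c : Fin p → EuclideanSpace ℝ (Fin n))
    (b d : Fin q → EuclideanSpace ℝ (Fin n)) :
    ((colMat h a b)ᵀ * colMat h c d).det =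
      (Matrix.fromBlocks
        (Matrix.of fun i j => ⟪a i, c j⟫) (Matrix.of fun i j => ⟪a i, d j⟫)
        (Matrix.of fun i j => ⟪b i, c j⟫)
          (Matrix.of fun i j => ⟪b i, d j⟫)).det := by
  rw [transpose_mul_colMat, Matrix.det_submatrix_equiv_self]

end Stmt1Aux

open Stmt1Aux

/-- For transverse subspaces `V, W ⊆ ℝ^n` of complementary dimensions
`ℓ` and `m`, `|V ∧ W| = |V^⊥ ∧ W^⊥|`, where `|·∧·|` is the absolute determinant of the
matrix formed by concatenating orthonormal bases. -/
theorem stmt1 (n ℓ m : ℕ) (hn : ℓ + m = n)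
    (V W : Submodule ℝ (EuclideanSpace ℝ (Fin n)))
    (hVdim : finrank ℝ V = ℓ) (hWdim : finrank ℝ W = m)
    (hVW : V ⊓ W = ⊥)
    (v : Fin ℓ → EuclideanSpace ℝ (Fin n)) (w : Fin m → EuclideanSpace ℝ (Fin n))
    (v' : Fin m → EuclideanSpace ℝ (Fin n)) (w' : Fin ℓ → EuclideanSpace ℝ (Fin n))
    (hv : Orthonormal ℝ v) (hw : Orthonormal ℝ w)
    (hv' : Orthonormal ℝ v') (hw' : Orthonormal ℝ w')
    (hvV : Submodule.span ℝ (Set.range v) = V)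
    (hwW : Submodule.span ℝ (Set.range w) = W)
    (hv'V : Submodule.span ℝ (Set.range v') = Vᗮ)
    (hw'W : Submodule.span ℝ (Set.range w') = Wᗮ) :
    |(Matrix.of fun (i j : Fin n) => Fin.append v w (Fin.cast hn.symm j) i).det| =
      |(Matrix.of fun (i j : Fin n) =>
        Fin.append v' w' (Fin.cast (by omega : n = m + ℓ) j) i).det| := by
  have hn' : m + ℓ = n := by omega
  -- membership facts
  have hvV' : ∀ i, v i ∈ V := fun i => hvV ▸ Submodule.subset_span (Set.mem_range_self i)
  have hwW' : ∀ i, w i ∈ W := fun i => hwW ▸ Submodule.subset_span (Set.mem_range_self i)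
  have hv'V' : ∀ i, v' i ∈ Vᗮ := fun i => hv'V ▸ Submodule.subset_span (Set.mem_range_self i)
  have hw'W' : ∀ i, w' i ∈ Wᗮ := fun i => hw'W ▸ Submodule.subset_span (Set.mem_range_self i)
  have hw'w : ∀ i j, ⟪w' i, w j⟫ = 0 := fun i j =>
    real_inner_comm (w' i) (w j) ▸ (Submodule.mem_orthogonal W (w' i)).1 (hw'W' i) _ (hwW' j)
  have hv'v : ∀ i j, ⟪v' i, v j⟫ = 0 := fun i j =>
    real_inner_comm (v' i) (v j) ▸ (Submodule.mem_orthogonal V (v' i)).1 (hv'V' i) _ (hvV' j)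
  -- the matrices in question
  have hA : (Matrix.of fun (i j : Fin n) => Fin.append v w (Fin.cast hn.symm j) i) =
      colMat hn v w := rfl
  have hB : (Matrix.of fun (i j : Fin n) =>
      Fin.append v' w' (Fin.cast (by omega : n = m + ℓ) j) i) = colMat hn' v' w' := rfl
  rw [hA, hB]
  set X : Matrix (Fin ℓ) (Fin ℓ) ℝ := Matrix.of fun i j => ⟪w' i, v j⟫ with hX
  -- orthogonal matrices Q = [w' w] and P = [v' v]
  have hQ : (colMat hn w' w)ᵀ * colMat hn w' w = 1 := by
    rw [transpose_mul_colMat]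
    have h11 : (Matrix.of fun i j => ⟪w' i, w' j⟫) = (1 : Matrix (Fin ℓ) (Fin ℓ) ℝ) := by
      ext i j; simpa [Matrix.one_apply] using orthonormal_iff_ite.1 hw' i j
    have h12 : (Matrix.of fun i j => ⟪w' i, w j⟫) = (0 : Matrix (Fin ℓ) (Fin m) ℝ) := by
      ext i j; simpa using hw'w i j
    have h21 : (Matrix.of fun i j => ⟪w i, w' j⟫) = (0 : Matrix (Fin m) (Fin ℓ) ℝ) := by
      ext i j
      simp only [Matrix.of_apply, Matrix.zero_apply]
      rw [real_inner_comm]; exact hw'w j i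
    have h22 : (Matrix.of fun i j => ⟪w i, w j⟫) = (1 : Matrix (Fin m) (Fin m) ℝ) := by
      ext i j; simpa [Matrix.one_apply] using orthonormal_iff_ite.1 hw i j
    rw [h11, h12, h21, h22, Matrix.fromBlocks_one]
    simp [Matrix.submatrix_one_equiv]
  have hP : (colMat hn' v' v)ᵀ * colMat hn' v' v = 1 := by
    rw [transpose_mul_colMat]
    have h11 : (Matrix.of fun i j => ⟪v' i, v' j⟫) = (1 : Matrix (Fin m) (Fin m) ℝ) := by
      ext i j; simpa [Matrix.one_apply] using orthonormal_iff_ite.1 hv' i j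
    have h12 : (Matrix.of fun i j => ⟪v' i, v j⟫) = (0 : Matrix (Fin m) (Fin ℓ) ℝ) := by
      ext i j; simpa using hv'v i j
    have h21 : (Matrix.of fun i j => ⟪v i, v' j⟫) = (0 : Matrix (Fin ℓ) (Fin m) ℝ) := by
      ext i j
      simp only [Matrix.of_apply, Matrix.zero_apply]
      rw [real_inner_comm]; exact hv'v j i
    have h22 : (Matrix.of fun i j => ⟪v i, v j⟫) = (1 : Matrix (Fin ℓ) (Fin ℓ) ℝ) := by
      ext i j; simpa [Matrix.one_apply] using orthonormal_iff_ite.1 hv i j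
    rw [h11, h12, h21, h22, Matrix.fromBlocks_one]
    simp [Matrix.submatrix_one_equiv]
  have hQdet : |(colMat hn w' w).det| = 1 := by
    have := congrArg Matrix.det hQ
    rw [Matrix.det_mul, Matrix.det_transpose, Matrix.det_one] at this
    nlinarith [abs_nonneg (colMat hn w' w).det, sq_abs (colMat hn w' w).det]
  have hPdet : |(colMat hn' v' v).det| = 1 := by
    have := congrArg Matrix.det hP
    rw [Matrix.det_mul, Matrix.det_transpose, Matrix.det_one] at this
    nlinarith [abs_nonneg (colMat hn' v' v).det, sq_abs (colMat hn' v' v).det]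
  -- |det A| = |det ((Qᵀ A))| = |det X|
  have hQA : |(colMat hn v w).det| = |X.det| := by
    have h1 : ((colMat hn w' w)ᵀ * colMat hn v w).det =
        (Matrix.fromBlocks X (Matrix.of fun i j => ⟪w' i, w j⟫)
          (Matrix.of fun i j => ⟪w i, v j⟫) (Matrix.of fun i j => ⟪w i, w j⟫)).det :=
      det_transpose_mul_colMat hn w' v w w
    have hz : (Matrix.of fun i j => ⟪w' i, w j⟫) = (0 : Matrix (Fin ℓ) (Fin m) ℝ) := by
      ext i j; simpa using hw'w i j
    have ho : (Matrix.of fun i j => ⟪w i, w j⟫) = (1 : Matrix (Fin m) (Fin m) ℝ) := by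
      ext i j; simpa [Matrix.one_apply] using orthonormal_iff_ite.1 hw i j
    rw [hz, ho, Matrix.det_fromBlocks_zero₁₂, Matrix.det_one, mul_one] at h1
    have := congrArg abs h1
    rw [Matrix.det_mul, Matrix.det_transpose, abs_mul, hQdet, one_mul] at this
    exact this
  -- |det B| = |det ((Pᵀ B))| = |det Xᵀ|
  have hPB : |(colMat hn' v' w').det| = |X.det| := by
    have h1 : ((colMat hn' v' v)ᵀ * colMat hn' v' w').det =
        (Matrix.fromBlocks (Matrix.of fun i j => ⟪v' i, v' j⟫)
          (Matrix.of fun i j => ⟪v' i, w' j⟫)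
          (Matrix.of fun i j => ⟪v i, v' j⟫) (Matrix.of fun i j => ⟪v i, w' j⟫)).det :=
      det_transpose_mul_colMat hn' v' v' v w'
    have hz : (Matrix.of fun i j => ⟪v i, v' j⟫) = (0 : Matrix (Fin ℓ) (Fin m) ℝ) := by
      ext i j
      simp only [Matrix.of_apply, Matrix.zero_apply]
      rw [real_inner_comm]; exact hv'v j i
    have ho : (Matrix.of fun i j => ⟪v' i, v' j⟫) = (1 : Matrix (Fin m) (Fin m) ℝ) := by
      ext i j; simpa [Matrix.one_apply] using orthonormal_iff_ite.1 hv' i j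
    have hxt : (Matrix.of fun i j => ⟪v i, w' j⟫) = Xᵀ := by
      ext i j
      simp only [Matrix.of_apply, Matrix.transpose_apply, hX]
      exact real_inner_comm _ _
    rw [hz, ho, hxt, Matrix.det_fromBlocks_zero₂₁, Matrix.det_one, one_mul,
      Matrix.det_transpose] at h1
    have := congrArg abs h1
    rw [Matrix.det_mul, Matrix.det_transpose, abs_mul, hPdet, one_mul] at this
    exact this
  rw [hQA, hPB]
end

section
/- Let S ⊂ ℝ^n be a connected one-dimensional C^1 submanifold (a C^1 curve) and let π be a one-dimensional subspace of ℝ^n, i.e. π = span{ω} for a unit vector ω. If the tangent line T_ξ S satisfies T_ξ S ∩ π^⊥ = {0} for all ξ ∈ S (equivalently, τ(ξ)·ω ≠ 0 for a unit tangent τ(ξ)), then for all distinct ξ, η ∈ S one has (ξ−η)·ω ≠ 0, i.e. ⟨ξ−η⟩ ∩ π^⊥ = {0}. -/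
open RealInnerProductSpace

/-- For a connected `C¹` curve `S = γ(ℝ) ⊆ ℝ^n` and a one-dimensional
subspace `π = span{ω}` with `ω` a unit vector: if every tangent vector satisfies
`τ(ξ)·ω ≠ 0` (condition (T), i.e. `T_ξS ∩ π^⊥ = {0}`), then for all distinct points
`γ(s) ≠ γ(t)` of `S` one has `(γ(s)−γ(t))·ω ≠ 0` (condition (GT)). -/
theorem stmt6 (n : ℕ) (γ : ℝ → EuclideanSpace ℝ (Fin n)) (hγ : ContDiff ℝ 1 γ)
    (ω : EuclideanSpace ℝ (Fin n)) (hω : ‖ω‖ = 1)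
    (hT : ∀ t : ℝ, ⟪deriv γ t, ω⟫ ≠ 0) :
    ∀ s t : ℝ, γ s ≠ γ t → ⟪γ s - γ t, ω⟫ ≠ 0 := by
  have hdiff : Differentiable ℝ γ := hγ.differentiable one_ne_zero
  set f : ℝ → ℝ := fun t => ⟪γ t, ω⟫ with hf
  have hfd : ∀ x : ℝ, HasDerivAt f (⟪deriv γ x, ω⟫) x := by
    intro x
    have h := ((hdiff x).hasDerivAt.inner ℝ (hasDerivAt_const x ω))
    simpa using h
  have hcont : Continuous f := by unfold f; exact hdiff.continuous.inner continuous_const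
  intro s t hne hcontra
  have hfeq : f s = f t := by
    have : f s - f t = 0 := by
      simpa [f, inner_sub_left] using hcontra
    linarith
  have hst : s ≠ t := by
    rintro rfl; exact hne rfl
  rcases hst.lt_or_gt with h | h
  · obtain ⟨c, hc, hc0⟩ := exists_deriv_eq_zero h hcont.continuousOn hfeq
    exact hT c (by rw [← (hfd c).deriv]; exact hc0)
  · obtain ⟨c, hc, hc0⟩ := exists_deriv_eq_zero h hcont.continuousOn hfeq.symm
    exact hT c (by rw [← (hfd c).deriv]; exact hc0)
end

section
/- Let U ⊆ ℝ^k be open, let φ: U → ℝ^{n−k} be C^1, and let Σ(u) = (u, φ(u)) ∈ ℝ^n be the graph map, whose image S is a k-dimensional submanifold. Set π = ℝ^k × {0} ⊂ ℝ^n and let J(u) = √(det G(u)) where G(u) is the Gram matrix of the partial derivatives ∂Σ/∂u_1,…,∂Σ/∂u_k. Then for every u ∈ U, J(u) · |T_{Σ(u)}S ∧ π^⊥| = 1, where T_{Σ(u)}S = span{∂Σ/∂u_1(u),…,∂Σ/∂u_k(u)} and |V ∧ W| is defined via orthonormal bases. -/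
open RealInnerProductSpace Module

/-- The graph map `Σ(u) = (u, φ(u)) ∈ ℝ^{k+m}` of `φ : ℝ^k → ℝ^m`. -/
noncomputable def graphMap {k m : ℕ}
    (φ : EuclideanSpace ℝ (Fin k) → EuclideanSpace ℝ (Fin m)) :
    EuclideanSpace ℝ (Fin k) → EuclideanSpace ℝ (Fin (k + m)) :=
  fun x => (WithLp.equiv 2 (Fin (k + m) → ℝ)).symm
    (Fin.append (fun i => x i) (fun i => φ x i))

/-- The partial derivative `∂Σ/∂u_i` of the graph map at `u`. -/
noncomputable def graphPartial {k m : ℕ}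
    (φ : EuclideanSpace ℝ (Fin k) → EuclideanSpace ℝ (Fin m))
    (u : EuclideanSpace ℝ (Fin k)) (i : Fin k) : EuclideanSpace ℝ (Fin (k + m)) :=
  fderiv ℝ (graphMap φ) u (EuclideanSpace.single i 1)

/-- The Jacobian `J(u) = √(det G(u))`, where `G(u)` is the Gram matrix of the partial
derivatives `∂Σ/∂u_1,…,∂Σ/∂u_k`. -/
noncomputable def graphJacobian {k m : ℕ}
    (φ : EuclideanSpace ℝ (Fin k) → EuclideanSpace ℝ (Fin m))
    (u : EuclideanSpace ℝ (Fin k)) : ℝ :=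
  Real.sqrt (Matrix.det (Matrix.of fun i j =>
    ⟪graphPartial φ u i, graphPartial φ u j⟫))

/- ### Auxiliary lemmas -/

lemma euc_sum_apply {n N : ℕ} (f : Fin N → EuclideanSpace ℝ (Fin n)) (l : Fin n) :
    (∑ j, f j) l = ∑ j, f j l := by
  induction (Finset.univ : Finset (Fin N)) using Finset.induction with
  | empty => rfl
  | insert _ _ h ih => rw [Finset.sum_insert h, Finset.sum_insert h, PiLp.add_apply, ih]

/-- Coordinate expansion of a vector in the span of an orthonormal family. -/
lemma expand_coord {n N : ℕ} {a : Fin N → EuclideanSpace ℝ (Fin n)} (ha : Orthonormal ℝ a)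
    {v : EuclideanSpace ℝ (Fin n)} (hv : v ∈ Submodule.span ℝ (Set.range a)) (l : Fin n) :
    v l = ∑ j, ⟪a j, v⟫ * a j l := by
  obtain ⟨c, rfl⟩ := Submodule.mem_span_range_iff_exists_fun ℝ |>.mp hv
  simp [ha.inner_right_fintype, euc_sum_apply, PiLp.smul_apply]

/-- Parseval-type identity in the span of an orthonormal family. -/
lemma inner_expand {n N : ℕ} {a : Fin N → EuclideanSpace ℝ (Fin n)} (ha : Orthonormal ℝ a)
    {v w : EuclideanSpace ℝ (Fin n)} (hv : v ∈ Submodule.span ℝ (Set.range a))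
    (hw : w ∈ Submodule.span ℝ (Set.range a)) :
    ⟪v, w⟫ = ∑ j, ⟪a j, v⟫ * ⟪a j, w⟫ := by
  obtain ⟨c, rfl⟩ := Submodule.mem_span_range_iff_exists_fun ℝ |>.mp hv
  obtain ⟨d, rfl⟩ := Submodule.mem_span_range_iff_exists_fun ℝ |>.mp hw
  rw [sum_inner]
  simp only [real_inner_smul_left, ha.inner_right_fintype, RCLike.star_def, starRingEnd_apply,
    star_trivial]

/-- The linear inclusion `ℝ^k × ℝ^m → ℝ^{k+m}`. -/
noncomputable def gLmap (k m : ℕ) :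
    (EuclideanSpace ℝ (Fin k) × EuclideanSpace ℝ (Fin m)) →L[ℝ] EuclideanSpace ℝ (Fin (k + m)) :=
  LinearMap.toContinuousLinearMap
  { toFun := fun p => (WithLp.equiv 2 (Fin (k + m) → ℝ)).symm
      (Fin.append (fun i => p.1 i) (fun i => p.2 i))
    map_add' := by
      intro p q
      ext l
      refine Fin.addCases (fun r => ?_) (fun j => ?_) l <;>
        simp [Fin.append_left, Fin.append_right]
    map_smul' := by
      intro c p
      ext l
      refine Fin.addCases (fun r => ?_) (fun j => ?_) l <;>
        simp [Fin.append_left, Fin.append_right] }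

lemma graphPartial_eq {k m : ℕ} (φ : EuclideanSpace ℝ (Fin k) → EuclideanSpace ℝ (Fin m))
    {u : EuclideanSpace ℝ (Fin k)} (hφ : DifferentiableAt ℝ φ u) (i : Fin k) :
    graphPartial φ u i
      = gLmap k m (EuclideanSpace.single i 1, fderiv ℝ φ u (EuclideanSpace.single i 1)) := by
  have h : HasFDerivAt (graphMap φ)
      ((gLmap k m).comp ((ContinuousLinearMap.id ℝ _).prod (fderiv ℝ φ u))) u := by
    have : graphMap φ = fun x => gLmap k m (x, φ x) := rfl
    rw [this]
    exact ((gLmap k m).hasFDerivAt).comp u (HasFDerivAt.prodMk (hasFDerivAt_id u) hφ.hasFDerivAt)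
  rw [graphPartial, h.fderiv]
  rfl

lemma graphPartial_castAdd {k m : ℕ} (φ : EuclideanSpace ℝ (Fin k) → EuclideanSpace ℝ (Fin m))
    {u : EuclideanSpace ℝ (Fin k)} (hφ : DifferentiableAt ℝ φ u) (i : Fin k) (r : Fin k) :
    graphPartial φ u i (Fin.castAdd m r) = if r = i then 1 else 0 := by
  rw [graphPartial_eq φ hφ i]
  show Fin.append _ _ (Fin.castAdd m r) = _
  rw [Fin.append_left]
  exact EuclideanSpace.single_apply i 1 r

lemma graphPartial_natAdd {k m : ℕ} (φ : EuclideanSpace ℝ (Fin k) → EuclideanSpace ℝ (Fin m))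
    {u : EuclideanSpace ℝ (Fin k)} (hφ : DifferentiableAt ℝ φ u) (i : Fin k) (j : Fin m) :
    graphPartial φ u i (Fin.natAdd k j) = fderiv ℝ φ u (EuclideanSpace.single i 1) j := by
  rw [graphPartial_eq φ hφ i]
  show Fin.append _ _ (Fin.natAdd k j) = _
  rw [Fin.append_right]

/-- For the graph `S = {(u, φ(u))}` of a `C¹` map `φ : U → ℝ^{n−k}` over
`π = ℝ^k × {0}`, one has `J(u) · |T_{Σ(u)}S ∧ π^⊥| = 1` at every `u ∈ U`, where
`T_{Σ(u)}S = span{∂Σ/∂u_i}`, `π^⊥ = {0} × ℝ^{n−k}` is spanned by the last `n−k` standard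
basis vectors, and `|V ∧ W|` is the absolute determinant of concatenated orthonormal bases. -/
theorem stmt7 (k m : ℕ) (U : Set (EuclideanSpace ℝ (Fin k))) (hU : IsOpen U)
    (φ : EuclideanSpace ℝ (Fin k) → EuclideanSpace ℝ (Fin m))
    (hφ : ContDiffOn ℝ 1 φ U)
    (u : EuclideanSpace ℝ (Fin k)) (hu : u ∈ U)
    (a : Fin k → EuclideanSpace ℝ (Fin (k + m)))
    (b : Fin m → EuclideanSpace ℝ (Fin (k + m)))
    (ha : Orthonormal ℝ a) (hb : Orthonormal ℝ b)
    (haT : Submodule.span ℝ (Set.range a) =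
      Submodule.span ℝ (Set.range (graphPartial φ u)))
    (hbP : Submodule.span ℝ (Set.range b) =
      Submodule.span ℝ (Set.range fun j : Fin m =>
        (EuclideanSpace.single (Fin.natAdd k j) (1 : ℝ) : EuclideanSpace ℝ (Fin (k + m))))) :
    graphJacobian φ u * |(Matrix.of fun i j => Fin.append a b j i).det| = 1 := by
  classical
  have hd : DifferentiableAt ℝ φ u :=
    ((hφ.differentiableOn one_ne_zero).differentiableAt (hU.mem_nhds hu))
  set p : Fin k → EuclideanSpace ℝ (Fin (k + m)) := graphPartial φ u with hp
  set e : Fin m → EuclideanSpace ℝ (Fin (k + m)) :=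
    fun j => EuclideanSpace.single (Fin.natAdd k j) (1 : ℝ) with he_def
  have he : Orthonormal ℝ e := by
    have h0 := (EuclideanSpace.basisFun (Fin (k + m)) ℝ).orthonormal
    have hinj : Function.Injective (Fin.natAdd k : Fin m → Fin (k + m)) := fun x y h => by
      have := congrArg Fin.val h
      simp only [Fin.coe_natAdd] at this
      exact Fin.ext (by omega)
    have h2 := h0.comp (Fin.natAdd k) hinj
    have heq : e = ⇑(EuclideanSpace.basisFun (Fin (k + m)) ℝ) ∘ Fin.natAdd k :=
      funext fun j => (EuclideanSpace.basisFun_apply _ _ _).symm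
    rw [heq]
    exact h2
  -- membership facts
  have hpmem : ∀ i, p i ∈ Submodule.span ℝ (Set.range a) := fun i => by
    rw [haT]; exact Submodule.subset_span (Set.mem_range_self i)
  have hemem : ∀ j, e j ∈ Submodule.span ℝ (Set.range b) := fun j => by
    rw [hbP]; exact Submodule.subset_span (Set.mem_range_self j)
  have hbmem : ∀ j, b j ∈ Submodule.span ℝ (Set.range e) := fun j => by
    rw [← hbP]; exact Submodule.subset_span (Set.mem_range_self j)
  -- the matrices
  set C : Matrix (Fin k) (Fin k) ℝ := Matrix.of fun j i => ⟪a j, p i⟫ with hC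
  set D : Matrix (Fin m) (Fin m) ℝ := Matrix.of fun j j' => ⟪b j, e j'⟫ with hD
  set Q : Matrix (Fin m) (Fin k) ℝ :=
    Matrix.of fun j i => fderiv ℝ φ u (EuclideanSpace.single i 1) j with hQ
  set N : Matrix (Fin (k + m)) (Fin (k + m)) ℝ :=
    Matrix.of fun l c => Fin.append a b c l with hN
  set M : Matrix (Fin (k + m)) (Fin (k + m)) ℝ :=
    (Matrix.fromBlocks 1 0 Q 1).submatrix finSumFinEquiv.symm finSumFinEquiv.symm with hM
  set B : Matrix (Fin (k + m)) (Fin (k + m)) ℝ :=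
    (Matrix.fromBlocks C 0 0 D).submatrix finSumFinEquiv.symm finSumFinEquiv.symm with hB
  -- M = N * B
  have hMNB : M = N * B := by
    ext l c
    rw [Matrix.mul_apply]
    refine Fin.addCases (fun i => ?_) (fun j' => ?_) c
    · have hsum : ∑ t, N l t * B t (Fin.castAdd m i) = ∑ j, ⟪a j, p i⟫ * a j l := by
        rw [Fin.sum_univ_add]
        simp only [hN, hB, Matrix.of_apply, Matrix.submatrix_apply,
          finSumFinEquiv_symm_apply_castAdd, finSumFinEquiv_symm_apply_natAdd,
          Fin.append_left, Fin.append_right, Matrix.fromBlocks_apply₁₁,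
          Matrix.fromBlocks_apply₂₁, Matrix.zero_apply, mul_zero, Finset.sum_const_zero,
          add_zero, hC]
        exact Finset.sum_congr rfl fun j _ => mul_comm _ _
      rw [hsum, ← expand_coord ha (hpmem i) l]
      have hMl : M l (Fin.castAdd m i) = p i l := by
        refine Fin.addCases (fun r => ?_) (fun j => ?_) l
        · simp only [hM, Matrix.submatrix_apply, finSumFinEquiv_symm_apply_castAdd,
            Matrix.fromBlocks_apply₁₁, Matrix.one_apply]
          rw [hp, graphPartial_castAdd φ hd i r]
        · simp only [hM, Matrix.submatrix_apply, finSumFinEquiv_symm_apply_castAdd,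
            finSumFinEquiv_symm_apply_natAdd, Matrix.fromBlocks_apply₂₁, hQ, Matrix.of_apply]
          rw [hp, graphPartial_natAdd φ hd i j]
      rw [hMl]
    · have hsum : ∑ t, N l t * B t (Fin.natAdd k j') = ∑ j, ⟪b j, e j'⟫ * b j l := by
        rw [Fin.sum_univ_add]
        simp only [hN, hB, Matrix.of_apply, Matrix.submatrix_apply,
          finSumFinEquiv_symm_apply_castAdd, finSumFinEquiv_symm_apply_natAdd,
          Fin.append_left, Fin.append_right, Matrix.fromBlocks_apply₁₂,
          Matrix.fromBlocks_apply₂₂, Matrix.zero_apply, mul_zero, Finset.sum_const_zero,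
          zero_add, hD]
        exact Finset.sum_congr rfl fun j _ => mul_comm _ _
      rw [hsum, ← expand_coord hb (hemem j') l]
      have hMl : M l (Fin.natAdd k j') = e j' l := by
        refine Fin.addCases (fun r => ?_) (fun j => ?_) l
        · have hne : (Fin.castAdd m r : Fin (k + m)) ≠ Fin.natAdd k j' := by
            intro h
            have := congrArg Fin.val h
            simp only [Fin.coe_castAdd, Fin.coe_natAdd] at this
            omega
          simp only [hM, Matrix.submatrix_apply, finSumFinEquiv_symm_apply_castAdd,
            finSumFinEquiv_symm_apply_natAdd, Matrix.fromBlocks_apply₁₂, Matrix.zero_apply,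
            he_def]
          rw [EuclideanSpace.single_apply, if_neg hne]
        · simp only [hM, Matrix.submatrix_apply, finSumFinEquiv_symm_apply_natAdd,
            Matrix.fromBlocks_apply₂₂, Matrix.one_apply, he_def]
          rw [EuclideanSpace.single_apply]
          have : (Fin.natAdd k j = Fin.natAdd k j') ↔ (j = j') := by
            constructor
            · intro h
              have := congrArg Fin.val h
              simp only [Fin.coe_natAdd] at this
              exact Fin.ext (by omega)
            · intro h; rw [h]
          simp [this]
      rw [hMl]
  -- det M = 1
  have hdetM : M.det = 1 := by
    rw [hM, Matrix.det_submatrix_equiv_self, Matrix.det_fromBlocks_zero₁₂]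
    simp
  -- det B = det C * det D
  have hdetB : B.det = C.det * D.det := by
    rw [hB, Matrix.det_submatrix_equiv_self, Matrix.det_fromBlocks_zero₁₂]
  -- the Jacobian equals |det C|
  have hJ : graphJacobian φ u = |C.det| := by
    have hG : (Matrix.of fun i j => ⟪graphPartial φ u i, graphPartial φ u j⟫ :
        Matrix (Fin k) (Fin k) ℝ) = C.transpose * C := by
      ext i i'
      rw [Matrix.mul_apply]
      simp only [Matrix.transpose_apply, hC, Matrix.of_apply]
      exact inner_expand ha (hpmem i) (hpmem i')
    rw [graphJacobian, hG, Matrix.det_mul, Matrix.det_transpose, ← sq, Real.sqrt_sq_eq_abs]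
  -- |det D| = 1
  have hdetD : |D.det| = 1 := by
    have hDD : D * D.transpose = 1 := by
      ext j j''
      rw [Matrix.mul_apply]
      simp only [Matrix.transpose_apply, hD, Matrix.of_apply]
      have := inner_expand he (hbmem j) (hbmem j'')
      have hflip : ∀ j' : Fin m, ⟪b j, e j'⟫ * ⟪b j'', e j'⟫
          = ⟪e j', b j⟫ * ⟪e j', b j''⟫ := fun j' => by
        rw [real_inner_comm (b j), real_inner_comm (b j'')]
      calc ∑ j', ⟪b j, e j'⟫ * ⟪b j'', e j'⟫
          = ∑ j', ⟪e j', b j⟫ * ⟪e j', b j''⟫ := Finset.sum_congr rfl fun j' _ => hflip j'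
        _ = ⟪b j, b j''⟫ := (inner_expand he (hbmem j) (hbmem j'')).symm
        _ = (1 : Matrix (Fin m) (Fin m) ℝ) j j'' := by
            rw [orthonormal_iff_ite.mp hb, Matrix.one_apply]
    have h1 : D.det * D.det = 1 := by
      have := congrArg Matrix.det hDD
      rwa [Matrix.det_mul, Matrix.det_transpose, Matrix.det_one] at this
    rcases mul_self_eq_one_iff.mp h1 with h | h <;> rw [h] <;> norm_num
  -- assemble
  have hNA : (Matrix.of fun i j => Fin.append a b j i) = N := rfl
  rw [hJ]
  have key : |N.det| * (|C.det| * |D.det|) = 1 := by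
    rw [← abs_mul, ← abs_mul, ← hdetB, ← Matrix.det_mul, ← hMNB, hdetM, abs_one]
  calc |C.det| * |N.det| = |N.det| * (|C.det| * |D.det|) := by rw [hdetD]; ring
    _ = 1 := key
end
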